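/- The subalgebra σ(L^∞_r(ℝⁿ)) of L^∞(ℝⁿ) is self-adjoint: if g = σ(A) for some A ∈ L^∞_r(ℝⁿ), then the complex conjugate of g is also in σ(L^∞_r(ℝⁿ)); indeed conj(g) = σ(FAF) where F is the antiunitary flip Fφ(p) = conj(φ(−p)). -/

import Mathlib

open MeasureTheory FourierTransform
open scoped ENNReal ComplexConjugate

noncomputable section

/-- The relativistic energy `E(p) = √(|p|² + m²)`. -/
def energy {n : ℕ} (m : ℝ) (p : EuclideanSpace ℝ (Fin n)) : ℝ :=
  Real.sqrt (‖p‖ ^ 2 + m ^ 2)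

/-- The measure `dp/E(p)` on `ℝⁿ`, so `L²_r(ℝⁿ) = L²(μᵣ)`. -/
def rMeasure {n : ℕ} (m : ℝ) : Measure (EuclideanSpace ℝ (Fin n)) :=
  volume.withDensity fun p => ENNReal.ofReal (1 / energy m p)

/-- The relativistic momentum Hilbert space `L²_r(ℝⁿ)`. -/
abbrev L2r (n : ℕ) (m : ℝ) := Lp ℂ 2 (rMeasure (n := n) m)

/-- `T` is (a bounded realization of) the translation `T_a φ(p) = φ(p−a)` on `L²_r(ℝⁿ)`. -/
def IsTransl {n : ℕ} (m : ℝ) (a : EuclideanSpace ℝ (Fin n))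
    (T : L2r n m →L[ℂ] L2r n m) : Prop :=
  ∀ φ : L2r n m, (T φ : EuclideanSpace ℝ (Fin n) → ℂ) =ᵐ[rMeasure m] fun p => φ (p - a)

/-- `L^∞_r(ℝⁿ)`: the commutant of the translations in `B(L²_r(ℝⁿ))`. -/
def Linftyr (n : ℕ) (m : ℝ) : Set (L2r n m →L[ℂ] L2r n m) :=
  {A | ∀ (a : EuclideanSpace ℝ (Fin n)) (T : L2r n m →L[ℂ] L2r n m),
    IsTransl m a T → A.comp T = T.comp A}

/-- `g` is the symbol of `A ∈ B(L²_r(ℝⁿ))`: the restriction of `A` to `L²(ℝⁿ)` acts as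
multiplication by `g` in the position (inverse Fourier) picture, i.e. `A ψ̂ = (g·ψ)^`
for ψ in the dense class `L¹ ∩ L²`. -/
def IsSymbol {n : ℕ} (m : ℝ) (A : L2r n m →L[ℂ] L2r n m)
    (g : EuclideanSpace ℝ (Fin n) → ℂ) : Prop :=
  ∀ ψ : EuclideanSpace ℝ (Fin n) → ℂ, Integrable ψ → MemLp ψ 2 volume →
    ∀ φ : L2r n m, (φ : EuclideanSpace ℝ (Fin n) → ℂ) =ᵐ[volume] 𝓕 ψ →
      (A φ : EuclideanSpace ℝ (Fin n) → ℂ) =ᵐ[volume] 𝓕 fun x => g x * ψ x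

namespace SymAux

variable {n : ℕ} {m : ℝ}

lemma energy_neg (m : ℝ) (p : EuclideanSpace ℝ (Fin n)) : energy m (-p) = energy m p := by
  simp [energy]

lemma energy_pos (hm : 0 < m) (p : EuclideanSpace ℝ (Fin n)) : 0 < energy m p :=
  Real.sqrt_pos.2 (by positivity)

lemma measurable_dens (m : ℝ) :
    Measurable (fun p : EuclideanSpace ℝ (Fin n) => ENNReal.ofReal (1 / energy m p)) := by
  apply Measurable.ennreal_ofReal
  have h : Continuous fun p : EuclideanSpace ℝ (Fin n) => energy m p := by
    unfold energy; fun_prop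
  exact measurable_const.div h.measurable

lemma negMP (m : ℝ) :
    MeasurePreserving (fun p : EuclideanSpace ℝ (Fin n) => -p) (rMeasure m) (rMeasure m) := by
  refine ⟨measurable_neg, ?_⟩
  have hvol : MeasurePreserving (fun p : EuclideanSpace ℝ (Fin n) => -p) volume volume :=
    Measure.measurePreserving_neg _
  have hemb : MeasurableEmbedding (fun p : EuclideanSpace ℝ (Fin n) => -p) :=
    (MeasurableEquiv.neg (EuclideanSpace ℝ (Fin n))).measurableEmbedding
  ext s hs
  rw [Measure.map_apply measurable_neg hs, rMeasure,
    withDensity_apply _ (measurable_neg hs), withDensity_apply _ hs]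
  have := hvol.setLIntegral_comp_preimage_emb hemb
    (fun p => ENNReal.ofReal (1 / energy m p)) s
  simpa [energy_neg] using this

lemma rM_ac : rMeasure (n := n) m ≪ volume :=
  withDensity_absolutelyContinuous _ _

lemma vol_ac (hm : 0 < m) : (volume : Measure (EuclideanSpace ℝ (Fin n))) ≪ rMeasure m := by
  refine withDensity_absolutelyContinuous' (measurable_dens m).aemeasurable
    (Filter.Eventually.of_forall fun p => ?_)
  simp only [ne_eq, ENNReal.ofReal_eq_zero, not_le]
  have := energy_pos hm p
  positivity

lemma qmp (hm : 0 < m) {e : EuclideanSpace ℝ (Fin n) → EuclideanSpace ℝ (Fin n)}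
    (he : MeasurePreserving e volume volume) :
    Measure.QuasiMeasurePreserving e (rMeasure (n := n) m) (rMeasure m) := by
  refine ⟨he.measurable, ?_⟩
  have h1 : (rMeasure (n := n) m).map e ≪ volume.map e := rM_ac.map he.measurable
  rw [he.map_eq] at h1
  exact h1.trans (vol_ac hm)

def conjCLM : ℂ →L[ℝ] ℂ := (RCLike.conjCLE : ℂ ≃L[ℝ] ℂ).toContinuousLinearMap

/-- the antiunitary flip `Fφ(p) = conj (φ(−p))` on `L²_r`. -/
def flipF (m : ℝ) : L2r n m → L2r n m := fun φ =>
  (conjCLM.compLpL 2 (rMeasure m)) (Lp.compMeasurePreserving _ (negMP m) φ)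

lemma flip_apply (φ : L2r n m) :
    (flipF m φ : EuclideanSpace ℝ (Fin n) → ℂ) =ᵐ[rMeasure m]
      fun p => conj (φ (-p)) := by
  have h1 := ContinuousLinearMap.coeFn_compLpL (μ := rMeasure m) (p := 2) conjCLM
    (Lp.compMeasurePreserving _ (negMP m) φ)
  have h2 := Lp.coeFn_compMeasurePreserving (f := fun p : EuclideanSpace ℝ (Fin n) => -p)
    φ (negMP m)
  filter_upwards [h1, h2] with p hp hq
  rw [flipF] at *
  rw [hp, hq]
  rfl

lemma flip_comp_neg (hm : 0 < m) (φ : L2r n m) :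
    (fun p => (flipF m φ : EuclideanSpace ℝ (Fin n) → ℂ) (-p)) =ᵐ[rMeasure m]
      fun p => conj (φ p) := by
  have := (qmp hm (Measure.measurePreserving_neg
      (volume : Measure (EuclideanSpace ℝ (Fin n))))).ae_eq_comp (flip_apply φ)
  filter_upwards [this] with p hp
  simpa [Function.comp] using hp

lemma flip_flip (hm : 0 < m) (φ : L2r n m) : flipF m (flipF m φ) = φ := by
  apply Lp.ext
  have h1 := flip_apply (m := m) (flipF m φ)
  have h2 := flip_comp_neg hm φ
  filter_upwards [h1, h2] with p hp hq
  rw [hp, hq]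
  simp

lemma flip_add (φ ψ : L2r n m) : flipF m (φ + ψ) = flipF m φ + flipF m ψ := by
  unfold flipF
  rw [map_add, map_add]

lemma flip_smul (hm : 0 < m) (c : ℂ) (φ : L2r n m) :
    flipF m (c • φ) = conj c • flipF m φ := by
  apply Lp.ext
  have h1 := flip_apply (m := m) (c • φ)
  have h2 := (qmp hm (Measure.measurePreserving_neg
      (volume : Measure (EuclideanSpace ℝ (Fin n))))).ae_eq_comp (Lp.coeFn_smul c φ)
  have h3 := Lp.coeFn_smul (conj c) (flipF m φ)
  have h4 := flip_apply (m := m) φ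
  filter_upwards [h1, h2, h3, h4] with p hp hq hr hs
  rw [hp, hr, Pi.smul_apply, hs]
  have : (↑↑(c • φ) : EuclideanSpace ℝ (Fin n) → ℂ) (-p) = c • (φ : EuclideanSpace ℝ (Fin n) → ℂ) (-p) := hq
  rw [this]
  simp [mul_comm]

lemma flip_cont : Continuous (flipF (n := n) m) :=
  (ContinuousLinearMap.continuous _).comp
    (Lp.isometry_compMeasurePreserving (negMP m)).continuous

end SymAux

namespace SymAux2
open SymAux
variable {n : ℕ} {m : ℝ}

/-- `conjOp T = F T F` where `F` is the flip. -/
def conjOp (hm : 0 < m) (T : L2r n m →L[ℂ] L2r n m) : L2r n m →L[ℂ] L2r n m where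
  toFun φ := flipF m (T (flipF m φ))
  map_add' φ ψ := by rw [flip_add, map_add, flip_add]
  map_smul' c φ := by
    rw [flip_smul hm, T.map_smul, flip_smul hm, RingHom.id_apply, Complex.conj_conj]
  cont := flip_cont.comp (T.continuous.comp flip_cont)

lemma conjOp_apply (hm : 0 < m) (T : L2r n m →L[ℂ] L2r n m) (φ : L2r n m) :
    conjOp hm T φ = flipF m (T (flipF m φ)) := rfl

lemma conjOp_conjOp (hm : 0 < m) (T : L2r n m →L[ℂ] L2r n m) :
    conjOp hm (conjOp hm T) = T := by
  ext φ
  simp [conjOp_apply, flip_flip hm]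

lemma conjOp_comp (hm : 0 < m) (S T : L2r n m →L[ℂ] L2r n m) :
    conjOp hm (S.comp T) = (conjOp hm S).comp (conjOp hm T) := by
  ext φ
  simp [conjOp_apply, flip_flip hm]

end SymAux2

namespace SymAux3
open SymAux SymAux2
variable {n : ℕ} {m : ℝ}

lemma fourier_conj (f : EuclideanSpace ℝ (Fin n) → ℂ) (w : EuclideanSpace ℝ (Fin n)) :
    𝓕 (fun x => conj (f x)) w = conj (𝓕 f (-w)) := by
  rw [Real.fourier_eq, Real.fourier_eq, ← integral_conj]
  congr 1
  funext v
  simp only [Circle.smul_def, map_mul, inner_neg_right, neg_neg,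
    Real.fourierChar_apply, smul_eq_mul]
  congr 1
  rw [← Complex.exp_conj]
  congr 1
  simp only [map_mul, Complex.conj_ofReal, Complex.conj_I]
  push_cast
  ring

lemma isTransl_conjOp (hm : 0 < m) {a : EuclideanSpace ℝ (Fin n)}
    {T : L2r n m →L[ℂ] L2r n m} (hT : IsTransl m a T) :
    IsTransl m (-a) (conjOp hm T) := by
  intro φ
  have h1 := flip_apply (m := m) (T (flipF m φ))
  have h2 := (qmp hm (Measure.measurePreserving_neg
      (volume : Measure (EuclideanSpace ℝ (Fin n))))).ae_eq_comp (hT (flipF m φ))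
  have hmp : MeasurePreserving (fun p : EuclideanSpace ℝ (Fin n) => -p - a) volume volume :=
    (measurePreserving_sub_right volume a).comp (Measure.measurePreserving_neg _)
  have h3 := (qmp hm hmp).ae_eq_comp (flip_apply (m := m) φ)
  rw [conjOp_apply]
  filter_upwards [h1, h2, h3] with p hp hq hr
  rw [hp]
  have hq' : (T (flipF m φ) : EuclideanSpace ℝ (Fin n) → ℂ) (-p)
      = (flipF m φ : EuclideanSpace ℝ (Fin n) → ℂ) (-p - a) := hq
  have hr' : (flipF m φ : EuclideanSpace ℝ (Fin n) → ℂ) (-p - a)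
      = conj ((φ : EuclideanSpace ℝ (Fin n) → ℂ) (-(-p - a))) := hr
  rw [hq', hr', Complex.conj_conj]
  congr 1
  abel

end SymAux3

/-- the image of the symbol map is self-adjoint: if `A ∈ L^∞_r(ℝⁿ)` has
symbol `g ∈ L^∞(ℝⁿ)`, then some `B ∈ L^∞_r(ℝⁿ)` has symbol `conj g`; indeed `B = FAF`
where `F` is the antiunitary flip `Fφ(p) = conj (φ(−p))`. -/
theorem symbol_image_selfadjoint {n : ℕ} (m : ℝ) (hm : 0 < m)
    (A : L2r n m →L[ℂ] L2r n m) (hA : A ∈ Linftyr n m)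
    (g : EuclideanSpace ℝ (Fin n) → ℂ) (hg : MemLp g ⊤ volume)
    (hsym : IsSymbol m A g) :
    ∃ B : L2r n m →L[ℂ] L2r n m, B ∈ Linftyr n m ∧
      IsSymbol m B (fun x => (starRingEnd ℂ) (g x)) ∧
      ∀ φ ψ : L2r n m,
        ((ψ : EuclideanSpace ℝ (Fin n) → ℂ) =ᵐ[rMeasure m]
          fun p => (starRingEnd ℂ) (φ (-p))) →
        ((B φ : EuclideanSpace ℝ (Fin n) → ℂ) =ᵐ[rMeasure m]
          fun p => (starRingEnd ℂ) ((A ψ) (-p))) := by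
  open SymAux SymAux2 SymAux3 in
  have negvol : MeasurePreserving (fun p : EuclideanSpace ℝ (Fin n) => -p) volume volume :=
    Measure.measurePreserving_neg _
  refine ⟨SymAux2.conjOp hm A, ?_, ?_, ?_⟩
  · intro a T hT
    have h2 := congrArg (SymAux2.conjOp hm) (hA (-a) _ (SymAux3.isTransl_conjOp hm hT))
    rwa [SymAux2.conjOp_comp, SymAux2.conjOp_comp, SymAux2.conjOp_conjOp] at h2
  · intro ψ hψi hψ2 φ hφ
    set χ : EuclideanSpace ℝ (Fin n) → ℂ := fun x => conj (ψ x) with hχ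
    have hχi : Integrable χ := SymAux.conjCLM.integrable_comp hψi
    have hχ2 : MemLp χ 2 volume := SymAux.conjCLM.comp_memLp' hψ2
    have hφ' : ((SymAux.flipF m φ : L2r n m) : EuclideanSpace ℝ (Fin n) → ℂ)
        =ᵐ[volume] 𝓕 χ := by
      have h1 := (SymAux.flip_apply (m := m) φ).filter_mono (SymAux.vol_ac hm).ae_le
      have hφn := negvol.quasiMeasurePreserving.ae_eq_comp hφ
      filter_upwards [h1, hφn] with p hp hq
      rw [hp]
      have hq' : (φ : EuclideanSpace ℝ (Fin n) → ℂ) (-p) = 𝓕 ψ (-p) := hq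
      rw [hq']
      exact (SymAux3.fourier_conj ψ p).symm
    have hsA := hsym χ hχi hχ2 (SymAux.flipF m φ) hφ'
    have hfun : (fun x => conj (g x * χ x))
        = fun x => (starRingEnd ℂ) (g x) * ψ x := by
      funext x; simp [hχ, mul_comm]
    rw [SymAux2.conjOp_apply]
    have h2 := (SymAux.flip_apply (m := m) (A (SymAux.flipF m φ))).filter_mono
      (SymAux.vol_ac hm).ae_le
    have h3 := negvol.quasiMeasurePreserving.ae_eq_comp hsA
    filter_upwards [h2, h3] with p hp hq
    rw [hp]
    have hq' : ((A (SymAux.flipF m φ)) : EuclideanSpace ℝ (Fin n) → ℂ) (-p)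
        = 𝓕 (fun x => g x * χ x) (-p) := hq
    rw [hq', ← SymAux3.fourier_conj (fun x => g x * χ x) p, hfun]
  · intro φ ψ hψ
    have hψ' : ψ = SymAux.flipF m φ :=
      Lp.ext (hψ.trans (SymAux.flip_apply (m := m) φ).symm)
    rw [SymAux2.conjOp_apply, hψ']
    exact SymAux.flip_apply _
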